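/- For every ℓ ∈ ℕ and every ζ ∈ ℂ, the surface integral over the unit sphere satisfies (2ℓ+1) ∫_{S²} (n₁ − i n₂)^ℓ · n(ζ)^ℓ dA(n) = 4π · 2^ℓ (ℓ!)² / (2ℓ)!. In particular the left-hand side is independent of ζ. -/

import Mathlib

open MeasureTheory

/-- `x(ζ) = (1/2)(x₁ + i x₂) + ζ x₃ − (1/2)(x₁ − i x₂) ζ²` on Euclidean `ℝ³`. -/
noncomputable def xzE (ζ : ℂ) (x : EuclideanSpace ℝ (Fin 3)) : ℂ :=
  (1 / 2 : ℂ) * ((x 0 : ℂ) + Complex.I * (x 1 : ℂ)) + ζ * (x 2 : ℂ)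
    - (1 / 2 : ℂ) * ((x 0 : ℂ) - Complex.I * (x 1 : ℂ)) * ζ ^ 2

open Set Real Finset
open scoped Nat

noncomputable section

def F3 (l : ℕ) (ζ : ℂ) (z : ℝ × ℝ × ℝ) : ℂ :=
  ((z.2.1 : ℂ) - Complex.I * z.2.2) ^ l *
    ((1 / 2 : ℂ) * ((z.2.1 : ℂ) + Complex.I * z.2.2) + ζ * (z.1 : ℂ)
      - (1 / 2 : ℂ) * ((z.2.1 : ℂ) - Complex.I * z.2.2) * ζ ^ 2) ^ l *
    ((Real.exp (-(z.1 ^ 2 + (z.2.1 ^ 2 + z.2.2 ^ 2))) : ℝ) : ℂ)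


/-- integrable: x^n e^{-x²} on ℝ -/
lemma int1Dpow (n : ℕ) : Integrable (fun x : ℝ => x ^ n * Real.exp (-x ^ 2)) := by
  have h := integrable_rpow_mul_exp_neg_mul_sq (b := 1) one_pos
      (s := (n : ℝ)) (by exact lt_of_lt_of_le (by norm_num) (Nat.cast_nonneg n))
  simpa [Real.rpow_natCast] using h

lemma intGauss1 (n : ℕ) : Integrable (fun x : ℝ => (1 + x ^ 2) ^ n * Real.exp (-x ^ 2)) := by
  have : (fun x : ℝ => (1 + x ^ 2) ^ n * Real.exp (-x ^ 2)) =
      fun x : ℝ => ∑ m ∈ Finset.range (n + 1), (n.choose m : ℝ) * (x ^ (2 * (n - m)) * Real.exp (-x ^ 2)) := by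
    funext x
    rw [add_pow, Finset.sum_mul]
    refine Finset.sum_congr rfl fun m _ => ?_
    rw [one_pow, ← pow_mul]
    ring
  rw [this]
  exact integrable_finset_sum _ fun m _ => (int1Dpow _).const_mul _

/-- dominated integrability on ℝ × ℝ -/
lemma int2D {g : ℝ × ℝ → ℂ} (hg : AEStronglyMeasurable g (volume : Measure (ℝ × ℝ)))
    (C : ℝ) (n : ℕ)
    (h : ∀ y : ℝ × ℝ, ‖g y‖ ≤ C * (1 + (y.1 ^ 2 + y.2 ^ 2)) ^ n * Real.exp (-(y.1 ^ 2 + y.2 ^ 2))) :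
    Integrable g (volume : Measure (ℝ × ℝ)) := by
  have hC : 0 ≤ C := by
    have h0 := (norm_nonneg (g (0, 0))).trans (h (0, 0))
    norm_num [Real.exp_zero] at h0
    exact h0
  have hD : Integrable (fun y : ℝ × ℝ =>
      (C * ((1 + y.1 ^ 2) ^ n * Real.exp (-y.1 ^ 2))) * ((1 + y.2 ^ 2) ^ n * Real.exp (-y.2 ^ 2)))
      (volume : Measure (ℝ × ℝ)) := by
    rw [Measure.volume_eq_prod]
    exact ((intGauss1 n).const_mul C).mul_prod (intGauss1 n)
  refine hD.mono' hg (Filter.Eventually.of_forall fun y => ?_)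
  refine (h y).trans ?_
  have h1 : (1 + (y.1 ^ 2 + y.2 ^ 2)) ^ n ≤ (1 + y.1 ^ 2) ^ n * (1 + y.2 ^ 2) ^ n := by
    rw [← mul_pow]
    refine pow_le_pow_left₀ (by positivity) (by nlinarith [sq_nonneg y.1, sq_nonneg y.2]) n
  have h2 : Real.exp (-(y.1 ^ 2 + y.2 ^ 2)) = Real.exp (-y.1 ^ 2) * Real.exp (-y.2 ^ 2) := by
    rw [← Real.exp_add]; ring_nf
  rw [h2]
  have := mul_le_mul_of_nonneg_left h1 hC
  nlinarith [Real.exp_pos (-y.1 ^ 2), Real.exp_pos (-y.2 ^ 2),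
    mul_le_mul_of_nonneg_right this (mul_pos (Real.exp_pos (-y.1 ^ 2)) (Real.exp_pos (-y.2 ^ 2))).le]



lemma GammaH : ∀ n : ℕ, Real.Gamma ((n : ℝ) + 3 / 2) =
    Real.sqrt π * (2 * n + 1)! / (4 ^ n * n ! * 2)
  | 0 => by
    have h : ((0 : ℕ) : ℝ) + 3 / 2 = 1 / 2 + 1 := by norm_num
    rw [h, Real.Gamma_add_one (by norm_num), Real.Gamma_one_half_eq]
    norm_num [Nat.factorial]
    ring
  | (n + 1) => by
    have h : ((n + 1 : ℕ) : ℝ) + 3 / 2 = ((n : ℝ) + 3 / 2) + 1 := by push_cast; ring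
    rw [h, Real.Gamma_add_one (by positivity), GammaH n]
    have h1 : (2 * (n + 1) + 1)! = (2 * n + 3) * ((2 * n + 2) * (2 * n + 1)!) := by
      have : 2 * (n + 1) + 1 = (2 * n + 2) + 1 := by ring
      rw [this, Nat.factorial_succ, Nat.factorial_succ]
    have h2 : (n + 1)! = (n + 1) * n ! := Nat.factorial_succ n
    rw [h1, h2]
    have hn4 : (4 : ℝ) ^ (n + 1) = 4 * 4 ^ n := by ring
    rw [hn4]
    have hfac : (0:ℝ) < (n ! : ℝ) := by exact_mod_cast Nat.factorial_pos n
    field_simp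
    push_cast
    ring

lemma oddGauss (a : ℕ) : ∫ r in Ioi (0 : ℝ), r ^ (2 * a + 1) * Real.exp (-r ^ 2)
    = (a ! : ℝ) / 2 := by
  have h := integral_rpow_mul_exp_neg_rpow (p := 2) (q := ((2 * a + 1 : ℕ) : ℝ)) two_pos
    (by exact lt_of_lt_of_le (by norm_num) (Nat.cast_nonneg _))
  have heq : ∫ x in Ioi (0:ℝ), x ^ (((2 * a + 1 : ℕ)) : ℝ) * Real.exp (-x ^ (2:ℝ))
      = ∫ r in Ioi (0 : ℝ), r ^ (2 * a + 1) * Real.exp (-r ^ 2) := by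
    refine setIntegral_congr_fun measurableSet_Ioi fun x _ => ?_
    rw [show (2:ℝ) = ((2:ℕ):ℝ) by norm_num, Real.rpow_natCast, Real.rpow_natCast]
  rw [heq] at h
  rw [h]
  have harg : (((2 * a + 1 : ℕ) : ℝ) + 1) / 2 = (a : ℝ) + 1 := by push_cast; ring
  rw [harg, Real.Gamma_nat_eq_factorial]
  ring

lemma evenGauss (l : ℕ) : ∫ r in Ioi (0 : ℝ), r ^ (2 * l + 2) * Real.exp (-r ^ 2)
    = Real.sqrt π * (2 * l + 1)! / (4 ^ l * l ! * 4) := by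
  have h := integral_rpow_mul_exp_neg_rpow (p := 2) (q := ((2 * l + 2 : ℕ) : ℝ)) two_pos
    (by exact lt_of_lt_of_le (by norm_num) (Nat.cast_nonneg _))
  have heq : ∫ x in Ioi (0:ℝ), x ^ (((2 * l + 2 : ℕ)) : ℝ) * Real.exp (-x ^ (2:ℝ))
      = ∫ r in Ioi (0 : ℝ), r ^ (2 * l + 2) * Real.exp (-r ^ 2) := by
    refine setIntegral_congr_fun measurableSet_Ioi fun x _ => ?_
    rw [show (2:ℝ) = ((2:ℕ):ℝ) by norm_num, Real.rpow_natCast, Real.rpow_natCast]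
  rw [heq] at h
  rw [h]
  have harg : (((2 * l + 2 : ℕ) : ℝ) + 1) / 2 = (l : ℝ) + 3 / 2 := by push_cast; ring
  rw [harg, GammaH l]
  ring



lemma angular_zero (d : ℤ) (hd : d ≠ 0) :
    ∫ t in Ioo (-π) π, Complex.exp (((d : ℂ) * Complex.I) * t) = 0 := by
  rw [← integral_Ioc_eq_integral_Ioo,
    ← intervalIntegral.integral_of_le (by linarith [Real.pi_pos] : -π ≤ π)]
  have hc : ((d : ℂ) * Complex.I) ≠ 0 := by
    simp [Complex.I_ne_zero, Int.cast_injective.ne_iff, hd]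
  rw [integral_exp_mul_complex hc]
  have h1 : (d : ℂ) * Complex.I * (π : ℂ) = (d : ℤ) * ((π : ℂ) * Complex.I) := by push_cast; ring
  have h2 : (d : ℂ) * Complex.I * ((-π : ℝ) : ℂ) = (-d : ℤ) * ((π : ℂ) * Complex.I) := by
    push_cast; ring
  rw [h1, h2, Complex.exp_int_mul, Complex.exp_int_mul, Complex.exp_pi_mul_I]
  have hsq : ((-1 : ℂ) ^ d) * ((-1 : ℂ) ^ d) = 1 := by
    rw [← mul_zpow]; norm_num
  rw [zpow_neg, inv_eq_of_mul_eq_one_right hsq]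
  simp

lemma angular_one : ∫ _ in Ioo (-π) π, (1 : ℂ) = ((2 * π : ℝ) : ℂ) := by
  rw [setIntegral_const]
  rw [Real.volume_real_Ioo_of_le (by linarith [Real.pi_pos])]
  push_cast
  rw [Complex.real_smul]
  push_cast
  ring

/-- the 2D Gaussian monomial integral -/
lemma Mval (a b : ℕ) :
    ∫ y : ℝ × ℝ, ((y.1 : ℂ) - Complex.I * y.2) ^ a * ((y.1 : ℂ) + Complex.I * y.2) ^ b *
      ((Real.exp (-(y.1 ^ 2 + y.2 ^ 2)) : ℝ) : ℂ)
    = if a = b then (π : ℂ) * (a ! : ℂ) else 0 := by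
  rw [← integral_comp_polarCoord_symm]
  have hEq : EqOn
      (fun p : ℝ × ℝ => p.1 • ((((polarCoord.symm p).1 : ℂ) - Complex.I * (polarCoord.symm p).2) ^ a *
        (((polarCoord.symm p).1 : ℂ) + Complex.I * (polarCoord.symm p).2) ^ b *
        ((Real.exp (-((polarCoord.symm p).1 ^ 2 + (polarCoord.symm p).2 ^ 2)) : ℝ) : ℂ)))
      (fun p : ℝ × ℝ =>
        ((p.1 : ℂ) ^ (a + b + 1) * ((Real.exp (-(p.1 ^ 2)) : ℝ) : ℂ)) *
        Complex.exp ((((b : ℂ) - (a : ℂ)) * Complex.I) * p.2))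
      polarCoord.target := by
    intro p _
    have hsymm : polarCoord.symm p = (p.1 * Real.cos p.2, p.1 * Real.sin p.2) :=
      polarCoord_symm_apply p
    simp only [hsymm]
    have hu : ((p.1 * Real.cos p.2 : ℝ) : ℂ) - Complex.I * ((p.1 * Real.sin p.2 : ℝ) : ℂ)
        = (p.1 : ℂ) * Complex.exp (-(p.2 : ℂ) * Complex.I) := by
      rw [Complex.exp_mul_I]
      push_cast
      rw [Complex.cos_neg, Complex.sin_neg, ← Complex.ofReal_cos, ← Complex.ofReal_sin]
      push_cast
      ring
    have hv : ((p.1 * Real.cos p.2 : ℝ) : ℂ) + Complex.I * ((p.1 * Real.sin p.2 : ℝ) : ℂ)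
        = (p.1 : ℂ) * Complex.exp ((p.2 : ℂ) * Complex.I) := by
      rw [Complex.exp_mul_I]
      rw [← Complex.ofReal_cos, ← Complex.ofReal_sin]
      push_cast
      ring
    have he : (p.1 * Real.cos p.2) ^ 2 + (p.1 * Real.sin p.2) ^ 2 = p.1 ^ 2 := by
      nlinarith [Real.sin_sq_add_cos_sq p.2]
    rw [hu, hv, he]
    rw [mul_pow, mul_pow, ← Complex.exp_nat_mul, ← Complex.exp_nat_mul]
    rw [Complex.real_smul]
    have hcombine : Complex.exp ((a : ℂ) * (-(p.2 : ℂ) * Complex.I)) *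
        Complex.exp ((b : ℂ) * ((p.2 : ℂ) * Complex.I))
        = Complex.exp ((((b : ℂ) - (a : ℂ)) * Complex.I) * (p.2 : ℂ)) := by
      rw [← Complex.exp_add]; congr 1; ring
    rw [← hcombine]
    ring
  rw [polarCoord_target] at hEq ⊢
  rw [setIntegral_congr_fun (measurableSet_Ioi.prod measurableSet_Ioo) hEq]
  rw [Measure.volume_eq_prod,
    setIntegral_prod_mul (fun r : ℝ => (r : ℂ) ^ (a + b + 1) * ((Real.exp (-r ^ 2) : ℝ) : ℂ))
      (fun t : ℝ => Complex.exp ((((b : ℂ) - (a : ℂ)) * Complex.I) * t)) (Ioi 0) (Ioo (-π) π)]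
  by_cases hab : a = b
  · subst hab
    have hBz : (((a : ℂ) - (a : ℂ)) * Complex.I) = 0 := by ring
    simp only [hBz, zero_mul, Complex.exp_zero]
    rw [angular_one]
    have hA : ∫ x in Ioi (0:ℝ), (x : ℂ) ^ (a + a + 1) * ((Real.exp (-x ^ 2) : ℝ) : ℂ)
        = ((∫ x in Ioi (0:ℝ), x ^ (2 * a + 1) * Real.exp (-x ^ 2) : ℝ) : ℂ) := by
      rw [show (∫ x in Ioi (0:ℝ), (x : ℂ) ^ (a + a + 1) * ((Real.exp (-x ^ 2) : ℝ) : ℂ))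
          = ∫ x in Ioi (0:ℝ), ((x ^ (2 * a + 1) * Real.exp (-x ^ 2) : ℝ) : ℂ) from
        setIntegral_congr_fun measurableSet_Ioi fun x _ => by push_cast; ring]
      exact integral_ofReal
    rw [hA, oddGauss]
    rw [if_true]
    push_cast
    ring
  · rw [if_neg hab]
    have hd : ((b : ℤ) - (a : ℤ)) ≠ 0 := by
      omega
    set d : ℤ := (b : ℤ) - (a : ℤ) with hdd
    have hcast : (((b : ℂ) - (a : ℂ)) * Complex.I) = ((d : ℂ) * Complex.I) := by
      rw [hdd]; push_cast; ring
    rw [hcast, angular_zero d hd, mul_zero]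

lemma norm_u_le (y : ℝ × ℝ) : ‖((y.1 : ℂ) - Complex.I * y.2)‖ ≤ 1 + (y.1 ^ 2 + y.2 ^ 2) := by
  have h2 : ‖((y.1 : ℂ) - Complex.I * y.2)‖ ^ 2 = y.1 ^ 2 + y.2 ^ 2 := by
    rw [Complex.sq_norm]
    simp [Complex.normSq_apply, Complex.mul_re, Complex.mul_im]
    ring
  nlinarith [sq_nonneg (‖((y.1 : ℂ) - Complex.I * y.2)‖ - 1),
    norm_nonneg ((y.1 : ℂ) - Complex.I * y.2)]

lemma norm_v_le (y : ℝ × ℝ) : ‖((y.1 : ℂ) + Complex.I * y.2)‖ ≤ 1 + (y.1 ^ 2 + y.2 ^ 2) := by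
  have h2 : ‖((y.1 : ℂ) + Complex.I * y.2)‖ ^ 2 = y.1 ^ 2 + y.2 ^ 2 := by
    rw [Complex.sq_norm]
    simp [Complex.normSq_apply, Complex.mul_re, Complex.mul_im]
    ring
  nlinarith [sq_nonneg (‖((y.1 : ℂ) + Complex.I * y.2)‖ - 1),
    norm_nonneg ((y.1 : ℂ) + Complex.I * y.2)]

lemma contMono (a j : ℕ) (c₁ c₂ : ℂ) : Continuous (fun y : ℝ × ℝ =>
    ((y.1 : ℂ) - Complex.I * y.2) ^ a *
      (c₁ * ((y.1 : ℂ) + Complex.I * y.2) + c₂ * ((y.1 : ℂ) - Complex.I * y.2)) ^ j *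
      ((Real.exp (-(y.1 ^ 2 + y.2 ^ 2)) : ℝ) : ℂ)) := by
  fun_prop

lemma intMono (a j : ℕ) (c₁ c₂ : ℂ) : Integrable (fun y : ℝ × ℝ =>
    ((y.1 : ℂ) - Complex.I * y.2) ^ a *
      (c₁ * ((y.1 : ℂ) + Complex.I * y.2) + c₂ * ((y.1 : ℂ) - Complex.I * y.2)) ^ j *
      ((Real.exp (-(y.1 ^ 2 + y.2 ^ 2)) : ℝ) : ℂ)) (volume : Measure (ℝ × ℝ)) := by
  refine int2D (contMono a j c₁ c₂).aestronglyMeasurable ((‖c₁‖ + ‖c₂‖) ^ j) (a + j) fun y => ?_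
  have hu := norm_u_le y
  have hv := norm_v_le y
  set s := y.1 ^ 2 + y.2 ^ 2 with hs
  have hs0 : 0 ≤ s := by positivity
  have hw : ‖c₁ * ((y.1 : ℂ) + Complex.I * y.2) + c₂ * ((y.1 : ℂ) - Complex.I * y.2)‖
      ≤ (‖c₁‖ + ‖c₂‖) * (1 + s) := by
    refine (norm_add_le _ _).trans ?_
    rw [norm_mul, norm_mul]
    have h1 : 0 ≤ ‖c₁‖ := norm_nonneg _
    have h2 : 0 ≤ ‖c₂‖ := norm_nonneg _
    nlinarith [norm_nonneg ((y.1 : ℂ) + Complex.I * y.2), norm_nonneg ((y.1 : ℂ) - Complex.I * y.2), hu, hv]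
  rw [norm_mul, norm_mul, norm_pow, norm_pow, Complex.norm_real, Real.norm_of_nonneg (Real.exp_pos _).le]
  have step : ‖((y.1 : ℂ) - Complex.I * y.2)‖ ^ a *
      ‖c₁ * ((y.1 : ℂ) + Complex.I * y.2) + c₂ * ((y.1 : ℂ) - Complex.I * y.2)‖ ^ j *
      Real.exp (-s)
      ≤ (1 + s) ^ a * ((‖c₁‖ + ‖c₂‖) * (1 + s)) ^ j * Real.exp (-s) := by
    refine mul_le_mul_of_nonneg_right ?_ (Real.exp_pos _).le
    exact mul_le_mul (pow_le_pow_left₀ (norm_nonneg _) hu a)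
      (pow_le_pow_left₀ (norm_nonneg _) hw j) (by positivity) (by positivity)
  refine step.trans (le_of_eq ?_)
  rw [mul_pow, pow_add]; ring

lemma intMono' (a b : ℕ) : Integrable (fun y : ℝ × ℝ =>
    ((y.1 : ℂ) - Complex.I * y.2) ^ a * ((y.1 : ℂ) + Complex.I * y.2) ^ b *
      ((Real.exp (-(y.1 ^ 2 + y.2 ^ 2)) : ℝ) : ℂ)) (volume : Measure (ℝ × ℝ)) := by
  have := intMono a b 1 0
  simpa using this

lemma Nval (l k : ℕ) (hk : k ≤ l) (c₁ c₂ : ℂ) :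
    ∫ y : ℝ × ℝ, ((y.1 : ℂ) - Complex.I * y.2) ^ l *
      (c₁ * ((y.1 : ℂ) + Complex.I * y.2) + c₂ * ((y.1 : ℂ) - Complex.I * y.2)) ^ k *
      ((Real.exp (-(y.1 ^ 2 + y.2 ^ 2)) : ℝ) : ℂ)
    = if k = l then c₁ ^ l * ((π : ℂ) * (l ! : ℂ)) else 0 := by
  have hexp : (fun y : ℝ × ℝ => ((y.1 : ℂ) - Complex.I * y.2) ^ l *
      (c₁ * ((y.1 : ℂ) + Complex.I * y.2) + c₂ * ((y.1 : ℂ) - Complex.I * y.2)) ^ k *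
      ((Real.exp (-(y.1 ^ 2 + y.2 ^ 2)) : ℝ) : ℂ))
      = fun y : ℝ × ℝ => ∑ m ∈ Finset.range (k + 1),
        ((k.choose m : ℂ) * c₁ ^ m * c₂ ^ (k - m)) *
          (((y.1 : ℂ) - Complex.I * y.2) ^ (l + (k - m)) * ((y.1 : ℂ) + Complex.I * y.2) ^ m *
            ((Real.exp (-(y.1 ^ 2 + y.2 ^ 2)) : ℝ) : ℂ)) := by
    funext y
    rw [add_pow, Finset.mul_sum, Finset.sum_mul]
    refine Finset.sum_congr rfl fun m _ => ?_
    rw [mul_pow, mul_pow, pow_add]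
    ring
  rw [hexp, integral_finset_sum _ fun m _ => ((intMono' (l + (k - m)) m).const_mul _)]
  simp_rw [integral_const_mul, Mval]
  rcases eq_or_lt_of_le hk with heq | hlt
  · subst heq
    rw [if_pos rfl]
    rw [Finset.sum_eq_single k]
    · simp
    · intro m hm hne
      rw [if_neg (by
        have := Finset.mem_range.mp hm
        omega), mul_zero]
    · intro h; exact absurd (Finset.self_mem_range_succ k) h
  · rw [if_neg (by omega)]
    refine Finset.sum_eq_zero fun m hm => ?_
    rw [if_neg (by
      have := Finset.mem_range.mp hm
      omega), mul_zero]

lemma PhiVal (l : ℕ) (ζ : ℂ) (t : ℝ) :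
    ∫ y : ℝ × ℝ, ((y.1 : ℂ) - Complex.I * y.2) ^ l *
      ((1 / 2 : ℂ) * ((y.1 : ℂ) + Complex.I * y.2) + ζ * (t : ℂ)
        - (1 / 2 : ℂ) * ((y.1 : ℂ) - Complex.I * y.2) * ζ ^ 2) ^ l *
      ((Real.exp (-(y.1 ^ 2 + y.2 ^ 2)) : ℝ) : ℂ)
    = (1 / 2 : ℂ) ^ l * (π : ℂ) * (l ! : ℂ) := by
  have hexp : (fun y : ℝ × ℝ => ((y.1 : ℂ) - Complex.I * y.2) ^ l *
      ((1 / 2 : ℂ) * ((y.1 : ℂ) + Complex.I * y.2) + ζ * (t : ℂ)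
        - (1 / 2 : ℂ) * ((y.1 : ℂ) - Complex.I * y.2) * ζ ^ 2) ^ l *
      ((Real.exp (-(y.1 ^ 2 + y.2 ^ 2)) : ℝ) : ℂ))
      = fun y : ℝ × ℝ => ∑ k ∈ Finset.range (l + 1),
        ((ζ * (t : ℂ)) ^ (l - k) * (l.choose k : ℂ)) *
          (((y.1 : ℂ) - Complex.I * y.2) ^ l *
            ((1 / 2 : ℂ) * ((y.1 : ℂ) + Complex.I * y.2)
              + (-(ζ ^ 2) / 2) * ((y.1 : ℂ) - Complex.I * y.2)) ^ k *
            ((Real.exp (-(y.1 ^ 2 + y.2 ^ 2)) : ℝ) : ℂ)) := by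
    funext y
    have hbase : (1 / 2 : ℂ) * ((y.1 : ℂ) + Complex.I * y.2) + ζ * (t : ℂ)
        - (1 / 2 : ℂ) * ((y.1 : ℂ) - Complex.I * y.2) * ζ ^ 2
        = ((1 / 2 : ℂ) * ((y.1 : ℂ) + Complex.I * y.2)
            + (-(ζ ^ 2) / 2) * ((y.1 : ℂ) - Complex.I * y.2)) + ζ * (t : ℂ) := by ring
    rw [hbase, add_pow, Finset.mul_sum, Finset.sum_mul]
    refine Finset.sum_congr rfl fun k _ => ?_
    ring
  rw [hexp, integral_finset_sum _ fun k _ => ((intMono l k (1/2) (-(ζ^2)/2)).const_mul _)]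
  simp_rw [integral_const_mul]
  rw [Finset.sum_eq_single l]
  · rw [Nval l l le_rfl, if_pos rfl]
    simp
    ring
  · intro k hk hne
    rw [Nval l k (by have := Finset.mem_range.mp hk; omega), if_neg hne, mul_zero]
  · intro h; exact absurd (Finset.self_mem_range_succ l) h



lemma int3D {g : ℝ × ℝ × ℝ → ℂ} (hg : AEStronglyMeasurable g (volume : Measure (ℝ × ℝ × ℝ)))
    (C : ℝ) (n : ℕ)
    (h : ∀ z : ℝ × ℝ × ℝ, ‖g z‖ ≤
      C * (1 + (z.1 ^ 2 + (z.2.1 ^ 2 + z.2.2 ^ 2))) ^ n *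
        Real.exp (-(z.1 ^ 2 + (z.2.1 ^ 2 + z.2.2 ^ 2)))) :
    Integrable g (volume : Measure (ℝ × ℝ × ℝ)) := by
  have hC : 0 ≤ C := by
    have h0 := (norm_nonneg (g (0, 0, 0))).trans (h (0, 0, 0))
    norm_num [Real.exp_zero] at h0
    exact h0
  have hD : Integrable (fun z : ℝ × ℝ × ℝ =>
      (C * ((1 + z.1 ^ 2) ^ n * Real.exp (-z.1 ^ 2))) *
        (((1 + z.2.1 ^ 2) ^ n * Real.exp (-z.2.1 ^ 2)) *
          ((1 + z.2.2 ^ 2) ^ n * Real.exp (-z.2.2 ^ 2))))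
      (volume : Measure (ℝ × ℝ × ℝ)) := by
    have hin : Integrable (fun y : ℝ × ℝ =>
        ((1 + y.1 ^ 2) ^ n * Real.exp (-y.1 ^ 2)) * ((1 + y.2 ^ 2) ^ n * Real.exp (-y.2 ^ 2)))
        (volume : Measure (ℝ × ℝ)) := by
      rw [Measure.volume_eq_prod]
      exact (intGauss1 n).mul_prod (intGauss1 n)
    rw [Measure.volume_eq_prod]
    exact ((intGauss1 n).const_mul C).mul_prod hin
  refine hD.mono' hg (Filter.Eventually.of_forall fun z => ?_)
  refine (h z).trans ?_
  set a := z.1 ^ 2; set b := z.2.1 ^ 2; set c := z.2.2 ^ 2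
  have ha : 0 ≤ a := sq_nonneg _
  have hb : 0 ≤ b := sq_nonneg _
  have hc : 0 ≤ c := sq_nonneg _
  have hbase : 1 + (a + (b + c)) ≤ (1 + a) * ((1 + b) * (1 + c)) := by
    nlinarith [mul_nonneg ha hb, mul_nonneg hb hc, mul_nonneg ha hc,
      mul_nonneg (mul_nonneg ha hb) hc]
  have h1 : (1 + (a + (b + c))) ^ n ≤ (1 + a) ^ n * ((1 + b) ^ n * (1 + c) ^ n) := by
    rw [← mul_pow, ← mul_pow]
    exact pow_le_pow_left₀ (by positivity) hbase n
  have h2 : Real.exp (-(a + (b + c))) = Real.exp (-a) * (Real.exp (-b) * Real.exp (-c)) := by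
    rw [← Real.exp_add, ← Real.exp_add]; ring_nf
  rw [h2]
  have := mul_le_mul_of_nonneg_left h1 hC
  nlinarith [Real.exp_pos (-a), Real.exp_pos (-b), Real.exp_pos (-c),
    mul_le_mul_of_nonneg_right this
      (by positivity : (0:ℝ) ≤ Real.exp (-a) * (Real.exp (-b) * Real.exp (-c)))]

lemma contF3 (l : ℕ) (ζ : ℂ) : Continuous (F3 l ζ) := by
  unfold F3; fun_prop

lemma intF3 (l : ℕ) (ζ : ℂ) : Integrable (F3 l ζ) (volume : Measure (ℝ × ℝ × ℝ)) := by
  refine int3D (contF3 l ζ).aestronglyMeasurable ((1 / 2 + ‖ζ‖ + ‖ζ‖ ^ 2 / 2) ^ l) (2 * l)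
    fun z => ?_
  set t := z.1; set y := z.2
  set s := t ^ 2 + (y.1 ^ 2 + y.2 ^ 2) with hs
  have hs2 : y.1 ^ 2 + y.2 ^ 2 ≤ s := by nlinarith [sq_nonneg t]
  have hs0 : 0 ≤ s := by positivity
  have hu : ‖((y.1 : ℂ) - Complex.I * y.2)‖ ≤ 1 + s := (norm_u_le y).trans (by linarith)
  have hv : ‖((y.1 : ℂ) + Complex.I * y.2)‖ ≤ 1 + s := (norm_v_le y).trans (by linarith)
  have ht : ‖((t : ℝ) : ℂ)‖ ≤ 1 + s := by
    rw [Complex.norm_real, Real.norm_eq_abs]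
    nlinarith [sq_nonneg (|t| - 1), sq_abs t, sq_nonneg y.1, sq_nonneg y.2]
  have hX : ‖(1 / 2 : ℂ) * ((y.1 : ℂ) + Complex.I * y.2) + ζ * (t : ℂ)
      - (1 / 2 : ℂ) * ((y.1 : ℂ) - Complex.I * y.2) * ζ ^ 2‖
      ≤ (1 / 2 + ‖ζ‖ + ‖ζ‖ ^ 2 / 2) * (1 + s) := by
    refine le_trans (norm_sub_le _ _) ?_
    refine le_trans (add_le_add_left (norm_add_le _ _) _) ?_
    rw [norm_mul, norm_mul, norm_mul, norm_mul, norm_pow]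
    have e1 : ‖(1 / 2 : ℂ)‖ = 1 / 2 := by norm_num
    rw [e1]
    nlinarith [norm_nonneg ζ, norm_nonneg ((y.1 : ℂ) + Complex.I * y.2),
      norm_nonneg ((y.1 : ℂ) - Complex.I * y.2), hu, hv, ht, norm_nonneg ((t : ℝ) : ℂ),
      sq_nonneg (‖ζ‖)]
  have hE : ‖((Real.exp (-s) : ℝ) : ℂ)‖ = Real.exp (-s) := by
    rw [Complex.norm_real, Real.norm_of_nonneg (Real.exp_pos _).le]
  unfold F3
  rw [norm_mul, norm_mul, norm_pow, norm_pow, hE]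
  have step : ‖((y.1 : ℂ) - Complex.I * y.2)‖ ^ l *
      ‖(1 / 2 : ℂ) * ((y.1 : ℂ) + Complex.I * y.2) + ζ * (t : ℂ)
        - (1 / 2 : ℂ) * ((y.1 : ℂ) - Complex.I * y.2) * ζ ^ 2‖ ^ l * Real.exp (-s)
      ≤ (1 + s) ^ l * ((1 / 2 + ‖ζ‖ + ‖ζ‖ ^ 2 / 2) * (1 + s)) ^ l * Real.exp (-s) := by
    refine mul_le_mul_of_nonneg_right ?_ (Real.exp_pos _).le
    exact mul_le_mul (pow_le_pow_left₀ (norm_nonneg _) hu l)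
      (pow_le_pow_left₀ (norm_nonneg _) hX l) (by positivity) (by positivity)
  refine step.trans (le_of_eq ?_)
  rw [mul_pow, two_mul, pow_add]; ring

lemma F3Val (l : ℕ) (ζ : ℂ) :
    ∫ z : ℝ × ℝ × ℝ, F3 l ζ z
      = (1 / 2 : ℂ) ^ l * (π : ℂ) * (l ! : ℂ) * ((Real.sqrt π : ℝ) : ℂ) := by
  have hint := intF3 l ζ
  rw [Measure.volume_eq_prod] at hint ⊢
  rw [integral_prod _ hint]
  have hinner : ∀ t : ℝ, (∫ y : ℝ × ℝ, F3 l ζ (t, y))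
      = ((1 / 2 : ℂ) ^ l * (π : ℂ) * (l ! : ℂ)) * ((Real.exp (-t ^ 2) : ℝ) : ℂ) := by
    intro t
    have hfe : (fun y : ℝ × ℝ => F3 l ζ (t, y)) = fun y : ℝ × ℝ =>
        (((y.1 : ℂ) - Complex.I * y.2) ^ l *
          ((1 / 2 : ℂ) * ((y.1 : ℂ) + Complex.I * y.2) + ζ * (t : ℂ)
            - (1 / 2 : ℂ) * ((y.1 : ℂ) - Complex.I * y.2) * ζ ^ 2) ^ l *
          ((Real.exp (-(y.1 ^ 2 + y.2 ^ 2)) : ℝ) : ℂ)) * ((Real.exp (-t ^ 2) : ℝ) : ℂ) := by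
      funext y
      unfold F3
      have : Real.exp (-(t ^ 2 + (y.1 ^ 2 + y.2 ^ 2)))
          = Real.exp (-(y.1 ^ 2 + y.2 ^ 2)) * Real.exp (-t ^ 2) := by
        rw [← Real.exp_add]; ring_nf
      rw [this]
      push_cast
      ring
    rw [hfe, integral_mul_const, PhiVal]
  simp_rw [hinner]
  rw [integral_const_mul]
  have h1 : (∫ t : ℝ, ((Real.exp (-t ^ 2) : ℝ) : ℂ))
      = (((∫ t : ℝ, Real.exp (-t ^ 2)) : ℝ) : ℂ) := integral_ofReal
  have h2 : (∫ t : ℝ, Real.exp (-t ^ 2)) = Real.sqrt π := by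
    have := integral_gaussian 1
    simpa using this
  rw [h1, h2]





def PE (l : ℕ) (ζ : ℂ) (x : EuclideanSpace ℝ (Fin 3)) : ℂ :=
  ((x 0 : ℂ) - Complex.I * (x 1 : ℂ)) ^ l * xzE ζ x ^ l

def fE (l : ℕ) (ζ : ℂ) (x : EuclideanSpace ℝ (Fin 3)) : ℂ :=
  PE l ζ x * ((Real.exp (-‖x‖ ^ 2) : ℝ) : ℂ)

-- coordinate measurable equiv
def me3 : EuclideanSpace ℝ (Fin 3) ≃ᵐ ℝ × ℝ × ℝ :=
  (MeasurableEquiv.toLp 2 (Fin 3 → ℝ)).symm.trans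
    ((MeasurableEquiv.piFinSuccAbove (fun _ : Fin 3 => ℝ) 2).trans
      ((MeasurableEquiv.refl ℝ).prodCongr MeasurableEquiv.finTwoArrow))

lemma me3_mp : MeasurePreserving (⇑me3) (volume : Measure (EuclideanSpace ℝ (Fin 3))) volume := by
  have h1 := EuclideanSpace.volume_preserving_symm_measurableEquiv_toLp (Fin 3)
  have h2 := volume_preserving_piFinSuccAbove (fun _ : Fin 3 => ℝ) 2
  have h3 : MeasurePreserving (⇑((MeasurableEquiv.refl ℝ).prodCongr MeasurableEquiv.finTwoArrow))
      (volume : Measure (ℝ × (Fin 2 → ℝ))) (volume : Measure (ℝ × ℝ × ℝ)) := by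
    have := (MeasurePreserving.id (volume : Measure ℝ)).prod (volume_preserving_finTwoArrow ℝ)
    rw [← Measure.volume_eq_prod, ← Measure.volume_eq_prod] at this
    exact this
  exact (h3.comp h2).comp h1

lemma me3_apply (x : EuclideanSpace ℝ (Fin 3)) : me3 x = (x 2, x 0, x 1) := rfl

lemma norm_sq_coords (x : EuclideanSpace ℝ (Fin 3)) :
    ‖x‖ ^ 2 = x 2 ^ 2 + (x 0 ^ 2 + x 1 ^ 2) := by
  rw [EuclideanSpace.norm_eq, Real.sq_sqrt (by positivity)]
  rw [Fin.sum_univ_three]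
  simp [sq_abs]
  ring

lemma fE_eq_F3 (l : ℕ) (ζ : ℂ) (x : EuclideanSpace ℝ (Fin 3)) :
    fE l ζ x = F3 l ζ (me3 x) := by
  rw [me3_apply]
  unfold fE F3 PE xzE
  rw [norm_sq_coords]

lemma EtoF3 (l : ℕ) (ζ : ℂ) :
    ∫ x : EuclideanSpace ℝ (Fin 3), fE l ζ x = ∫ z : ℝ × ℝ × ℝ, F3 l ζ z := by
  rw [show (fun x : EuclideanSpace ℝ (Fin 3) => fE l ζ x) = fun x => F3 l ζ (me3 x) from
    funext (fE_eq_F3 l ζ)]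
  exact me3_mp.integral_comp me3.measurableEmbedding (F3 l ζ)

-- homogeneity
lemma homogP (l : ℕ) (ζ : ℂ) (r : ℝ) (θ : EuclideanSpace ℝ (Fin 3)) :
    PE l ζ (r • θ) = ((r : ℂ)) ^ (2 * l) * PE l ζ θ := by
  have h0 : ((r • θ) 0 : ℝ) = r * θ 0 := rfl
  have h1 : ((r • θ) 1 : ℝ) = r * θ 1 := rfl
  have h2 : ((r • θ) 2 : ℝ) = r * θ 2 := rfl
  unfold PE xzE
  rw [h0, h1, h2]
  have hu : (((r * θ 0 : ℝ)) : ℂ) - Complex.I * ((r * θ 1 : ℝ) : ℂ)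
      = (r : ℂ) * (((θ 0 : ℝ) : ℂ) - Complex.I * ((θ 1 : ℝ) : ℂ)) := by push_cast; ring
  have hX : (1 / 2 : ℂ) * (((r * θ 0 : ℝ) : ℂ) + Complex.I * ((r * θ 1 : ℝ) : ℂ))
        + ζ * ((r * θ 2 : ℝ) : ℂ)
        - (1 / 2 : ℂ) * (((r * θ 0 : ℝ) : ℂ) - Complex.I * ((r * θ 1 : ℝ) : ℂ)) * ζ ^ 2
      = (r : ℂ) * ((1 / 2 : ℂ) * (((θ 0 : ℝ) : ℂ) + Complex.I * ((θ 1 : ℝ) : ℂ))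
        + ζ * ((θ 2 : ℝ) : ℂ)
        - (1 / 2 : ℂ) * (((θ 0 : ℝ) : ℂ) - Complex.I * ((θ 1 : ℝ) : ℂ)) * ζ ^ 2) := by
    push_cast; ring
  rw [hX, hu, mul_pow, mul_pow, two_mul, pow_add]
  ring

-- sphere-side decomposition
lemma sphereSide (l : ℕ) (ζ : ℂ) :
    ∫ x : EuclideanSpace ℝ (Fin 3), fE l ζ x
      = (∫ θ : Metric.sphere (0 : EuclideanSpace ℝ (Fin 3)) 1, PE l ζ θ
          ∂((volume : Measure (EuclideanSpace ℝ (Fin 3))).toSphere)) *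
        (((∫ r in Ioi (0 : ℝ), r ^ 2 * (r ^ (2 * l) * Real.exp (-r ^ 2))) : ℝ) : ℂ) := by
  set E := EuclideanSpace ℝ (Fin 3)
  set g : Metric.sphere (0 : E) 1 → ℂ := fun θ => PE l ζ θ with hg
  set h : Ioi (0 : ℝ) → ℂ := fun r => (((r : ℝ) ^ (2 * l) * Real.exp (-(r : ℝ) ^ 2) : ℝ) : ℂ)
    with hh
  have step1 : ∫ x : E, fE l ζ x
      = ∫ x : ({0}ᶜ : Set E), fE l ζ ↑x ∂((volume : Measure E).comap Subtype.val) := by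
    rw [integral_subtype_comap (measurableSet_singleton 0).compl (fun x => fE l ζ x),
      MeasureTheory.restrict_compl_singleton]
  have step2 : ∀ x : ({0}ᶜ : Set E), fE l ζ ↑x
      = g ((homeomorphUnitSphereProd E) x).1 * h ((homeomorphUnitSphereProd E) x).2 := by
    intro x
    have hx : (x : E) ≠ 0 := x.2
    have hnorm : ‖(x : E)‖ ≠ 0 := norm_ne_zero_iff.mpr hx
    rw [hg, hh]
    simp only [homeomorphUnitSphereProd_apply_fst_coe, homeomorphUnitSphereProd_apply_snd_coe]
    rw [homogP]
    unfold fE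
    have hc : ((‖(x : E)‖ : ℝ) : ℂ) ≠ 0 := Complex.ofReal_ne_zero.mpr hnorm
    push_cast
    rw [inv_pow]
    field_simp
  have step3 : ∫ x : ({0}ᶜ : Set E), fE l ζ ↑x ∂((volume : Measure E).comap Subtype.val)
      = ∫ z : Metric.sphere (0 : E) 1 × Ioi (0 : ℝ), g z.1 * h z.2
          ∂((volume : Measure E).toSphere.prod
            (Measure.volumeIoiPow (Module.finrank ℝ E - 1))) := by
    rw [show (fun x : ({0}ᶜ : Set E) => fE l ζ ↑x)
        = fun x => g ((homeomorphUnitSphereProd E) x).1 * h ((homeomorphUnitSphereProd E) x).2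
      from funext step2]
    exact (volume : Measure E).measurePreserving_homeomorphUnitSphereProd.integral_comp
      (Homeomorph.measurableEmbedding _) (fun z => g z.1 * h z.2)
  have hdim : Module.finrank ℝ E - 1 = 2 := by
    simp [E, finrank_euclideanSpace]
  have step4 : ∫ z : Metric.sphere (0 : E) 1 × Ioi (0 : ℝ), g z.1 * h z.2
      ∂((volume : Measure E).toSphere.prod
        (Measure.volumeIoiPow (Module.finrank ℝ E - 1)))
      = (∫ θ, g θ ∂((volume : Measure E).toSphere)) *
          ∫ r, h r ∂(Measure.volumeIoiPow 2) := by
    rw [hdim]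
    exact integral_prod_mul g h
  have step5 : (∫ r, h r ∂(Measure.volumeIoiPow 2))
      = (((∫ r in Ioi (0 : ℝ), r ^ 2 * (r ^ (2 * l) * Real.exp (-r ^ 2))) : ℝ) : ℂ) := by
    simp only [Measure.volumeIoiPow, ENNReal.ofReal]
    rw [integral_withDensity_eq_integral_smul
      ((measurable_subtype_coe.pow_const _).real_toNNReal) h]
    rw [integral_subtype_comap measurableSet_Ioi
      (fun r : ℝ => Real.toNNReal (r ^ 2) • ((r ^ (2 * l) * Real.exp (-r ^ 2) : ℝ) : ℂ))]
    rw [show (∫ r in Ioi (0:ℝ), Real.toNNReal (r ^ 2) • ((r ^ (2 * l) * Real.exp (-r ^ 2) : ℝ) : ℂ))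
        = ∫ r in Ioi (0:ℝ), ((r ^ 2 * (r ^ (2 * l) * Real.exp (-r ^ 2)) : ℝ) : ℂ) from
      setIntegral_congr_fun measurableSet_Ioi fun r hr => by
        rw [NNReal.smul_def, Real.coe_toNNReal _ (sq_nonneg r), Complex.real_smul,
          ← Complex.ofReal_mul]]
    exact integral_ofReal
  rw [step1, step3, step4, step5]


lemma combined (l : ℕ) (ζ : ℂ) :
    (∫ θ : Metric.sphere (0 : EuclideanSpace ℝ (Fin 3)) 1, PE l ζ θ
        ∂((volume : Measure (EuclideanSpace ℝ (Fin 3))).toSphere)) *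
      (((∫ r in Ioi (0 : ℝ), r ^ 2 * (r ^ (2 * l) * Real.exp (-r ^ 2))) : ℝ) : ℂ)
    = (1 / 2 : ℂ) ^ l * (π : ℂ) * (l ! : ℂ) * ((Real.sqrt π : ℝ) : ℂ) :=
  (sphereSide l ζ).symm.trans ((EtoF3 l ζ).trans (F3Val l ζ))

/-- For every `ℓ ∈ ℕ` and every `ζ ∈ ℂ`,
`(2ℓ+1) ∫_{S²} (n₁ − i n₂)^ℓ n(ζ)^ℓ dA(n) = 4π · 2^ℓ (ℓ!)² / (2ℓ)!`;
in particular the left-hand side is independent of `ζ`. -/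
theorem sphere_integral_conj_coordinate_pow_mul_xz_pow (ℓ : ℕ) (ζ : ℂ) :
    (2 * ℓ + 1 : ℂ) *
        ∫ n : Metric.sphere (0 : EuclideanSpace ℝ (Fin 3)) 1,
          (((n : EuclideanSpace ℝ (Fin 3)) 0 : ℂ)
              - Complex.I * ((n : EuclideanSpace ℝ (Fin 3)) 1 : ℂ)) ^ ℓ *
            xzE ζ (n : EuclideanSpace ℝ (Fin 3)) ^ ℓ
          ∂((volume : Measure (EuclideanSpace ℝ (Fin 3))).toSphere) =
      4 * (Real.pi : ℂ) * 2 ^ ℓ * (Nat.factorial ℓ : ℂ) ^ 2 / (Nat.factorial (2 * ℓ) : ℂ) := by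
  have hkey := combined ℓ ζ
  have hJ : (∫ r in Ioi (0 : ℝ), r ^ 2 * (r ^ (2 * ℓ) * Real.exp (-r ^ 2)))
      = Real.sqrt π * (2 * ℓ + 1)! / (4 ^ ℓ * ℓ ! * 4) := by
    rw [show (∫ r in Ioi (0:ℝ), r ^ 2 * (r ^ (2 * ℓ) * Real.exp (-r ^ 2)))
        = ∫ r in Ioi (0:ℝ), r ^ (2 * ℓ + 2) * Real.exp (-r ^ 2) from
      setIntegral_congr_fun measurableSet_Ioi fun r _ => by ring]
    exact evenGauss ℓ
  rw [hJ] at hkey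
  set S := ∫ n : Metric.sphere (0 : EuclideanSpace ℝ (Fin 3)) 1,
          (((n : EuclideanSpace ℝ (Fin 3)) 0 : ℂ)
              - Complex.I * ((n : EuclideanSpace ℝ (Fin 3)) 1 : ℂ)) ^ ℓ *
            xzE ζ (n : EuclideanSpace ℝ (Fin 3)) ^ ℓ
          ∂((volume : Measure (EuclideanSpace ℝ (Fin 3))).toSphere) with hSdef
  have hSeq : (∫ θ : Metric.sphere (0 : EuclideanSpace ℝ (Fin 3)) 1, PE ℓ ζ θ
        ∂((volume : Measure (EuclideanSpace ℝ (Fin 3))).toSphere)) = S := rfl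
  rw [hSeq] at hkey
  -- nonzero facts
  have hA : ((Real.sqrt π : ℝ) : ℂ) ≠ 0 :=
    Complex.ofReal_ne_zero.mpr (ne_of_gt (Real.sqrt_pos.mpr Real.pi_pos))
  have h2l : ((2 * ℓ)! : ℂ) ≠ 0 := Nat.cast_ne_zero.mpr (Nat.factorial_ne_zero _)
  have hl : ((ℓ)! : ℂ) ≠ 0 := Nat.cast_ne_zero.mpr (Nat.factorial_ne_zero _)
  have h2l1 : ((2 * ℓ + 1 : ℕ) : ℂ) ≠ 0 := Nat.cast_ne_zero.mpr (by omega)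
  have hfs : (((2 * ℓ + 1)! : ℕ) : ℂ) = ((2 * ℓ + 1 : ℕ) : ℂ) * ((2 * ℓ)! : ℂ) := by
    exact_mod_cast congrArg (Nat.cast : ℕ → ℂ) (Nat.factorial_succ (2 * ℓ))
  push_cast at hkey
  have h4 : ((4 : ℂ)) ^ ℓ = 2 ^ ℓ * 2 ^ ℓ := by
    rw [show (4 : ℂ) = 2 * 2 by norm_num, mul_pow]
  have h12 : ((1 / 2 : ℂ)) ^ ℓ * 2 ^ ℓ = 1 := by
    rw [← mul_pow]; norm_num
  have h2p : ((2 : ℂ)) ^ ℓ ≠ 0 := pow_ne_zero _ two_ne_zero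
  push_cast at hkey
  rw [hfs] at hkey
  push_cast at hkey
  field_simp at hkey
  have key4 : ((2 * (ℓ : ℂ) + 1) * S * ((2 * ℓ)! : ℂ)) * (((Real.sqrt π : ℝ) : ℂ) * 2 ^ ℓ)
      = (4 * (π : ℂ) * 2 ^ ℓ * ((ℓ)! : ℂ) ^ 2) * (((Real.sqrt π : ℝ) : ℂ) * 2 ^ ℓ) := by
    linear_combination (((Real.sqrt π : ℝ) : ℂ) * 2 ^ ℓ) * hkey + ((4 : ℂ) ^ ℓ * ((ℓ)! : ℂ) ^ 2 * 4 * (π : ℂ) * ((Real.sqrt π : ℝ) : ℂ)) * h12 + (4 * (π : ℂ) * ((ℓ)! : ℂ) ^ 2 * ((Real.sqrt π : ℝ) : ℂ)) * h4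
  have key5 := mul_right_cancel₀ (mul_ne_zero hA h2p) key4
  rw [eq_div_iff h2l]
  linear_combination key5

end
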